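/- Let p < s ≤ t, s < q, and let G be a K_{s,t}-free graph on n vertices, with n sufficiently large. Fix ε > 0 and let U be the set of vertices of G with degree at most εn. Then the number of copies of K_{p,q} in G whose side of size p contains at least one vertex of U is at most ε·n^{p+q-1}. -/

import Mathlib

open SimpleGraph Finset

/-- `G` contains a copy of `F`. -/
def Graph.Contains {α β : Type*} (F : SimpleGraph α) (G : SimpleGraph β) : Prop :=
  ∃ f : α ↪ β, ∀ ⦃a b : α⦄, F.Adj a b → G.Adj (f a) (f b)

/-- The number of subgraphs of `G` isomorphic to `H`, i.e. `N(H, G)`. -/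
noncomputable def Graph.copyCount {α β : Type*} (H : SimpleGraph α) (G : SimpleGraph β) : ℕ :=
  Set.ncard {G' : G.Subgraph | Nonempty (H ≃g G'.coe)}

/-- The join `G + G'` of two graphs. -/
def Graph.join {α β : Type*} (G : SimpleGraph α) (H : SimpleGraph β) :
    SimpleGraph (α ⊕ β) where
  Adj x y :=
    match x, y with
    | Sum.inl a, Sum.inl b => G.Adj a b
    | Sum.inr a, Sum.inr b => H.Adj a b
    | Sum.inl _, Sum.inr _ => True
    | Sum.inr _, Sum.inl _ => True
  symm := ⟨by rintro (a | a) (b | b) h <;> simp_all <;> exact h.symm⟩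
  loopless := ⟨by rintro (a | a) h <;> simp_all⟩

/-- `s` is the minimum size of a color class over proper `(r+1)`-colorings of `F` (σ(F) = s). -/
def Graph.IsSigma {α : Type*} (F : SimpleGraph α) (r s : ℕ) : Prop :=
  IsLeast {k : ℕ | ∃ (C : F.Coloring (Fin (r + 1))) (i : Fin (r + 1)),
    k = {v | C v = i}.ncard} s

open Finset

section
variable {α : Type*} [LinearOrder α]

def firstk (T : Finset α) (k : ℕ) : Finset α := ((T.sort (· ≤ ·)).take k).toFinset

lemma firstk_subset (T : Finset α) (k : ℕ) : firstk T k ⊆ T := by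
  intro x hx
  simp only [firstk, List.mem_toFinset] at hx
  exact (Finset.mem_sort _).1 (List.mem_of_mem_take hx)

lemma card_firstk (T : Finset α) {k : ℕ} (h : k ≤ T.card) : (firstk T k).card = k := by
  rw [firstk, List.card_toFinset,
    List.Nodup.dedup ((T.sort_nodup _).sublist (List.take_sublist _ _))]
  rw [List.length_take, Finset.length_sort]
  exact min_eq_left h

end

lemma choose_add_le_mul (a b c : ℕ) : a.choose (b + c) ≤ a.choose b * a.choose c := by
  classical
  rw [← Finset.card_range a, ← Finset.card_powersetCard, ← Finset.card_powersetCard,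
    ← Finset.card_powersetCard, ← Finset.card_product]
  apply Finset.card_le_card_of_injOn (fun W => (firstk W b, W \ firstk W b))
  · intro W hW
    rw [Finset.mem_coe, Finset.mem_powersetCard] at hW
    rw [Finset.mem_coe, Finset.mem_product, Finset.mem_powersetCard, Finset.mem_powersetCard]
    refine ⟨⟨(firstk_subset W b).trans hW.1, card_firstk W (by omega)⟩,
      (Finset.sdiff_subset).trans hW.1, ?_⟩
    rw [Finset.card_sdiff_of_subset (firstk_subset W b), card_firstk W (by omega), hW.2]
    omega
  · intro W1 h1 W2 h2 heq
    simp only [Prod.mk.injEq] at heq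
    have e1 : W1 = firstk W1 b ∪ (W1 \ firstk W1 b) :=
      (Finset.union_sdiff_of_subset (firstk_subset W1 b)).symm
    rw [e1, heq.2, heq.1, Finset.union_sdiff_of_subset (firstk_subset W2 b)]

lemma sub_le_choose_succ {k : ℕ} : ∀ c : ℕ, k + 1 ≤ c → c - k ≤ c.choose (k + 1) := by
  intro c
  induction c with
  | zero => omega
  | succ m ih =>
    intro h
    rcases Nat.lt_or_ge m (k+1) with h' | h'
    · have : m = k := by omega
      subst this
      simp
    · rw [Nat.choose_succ_succ]
      simp only [Nat.succ_eq_add_one] at *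
      have h2 : 1 ≤ m.choose k := Nat.choose_pos (by omega)
      have := ih h'
      omega

lemma le_choose_add {s : ℕ} (hs : 1 ≤ s) (c : ℕ) : c ≤ (s - 1) + c.choose s := by
  rcases Nat.lt_or_ge c s with h | h
  · have : c.choose s = 0 := Nat.choose_eq_zero_of_lt h
    omega
  · obtain ⟨k, rfl⟩ : ∃ k, s = k + 1 := ⟨s - 1, by omega⟩
    have := sub_le_choose_succ (k := k) c (by omega)
    omega

open SimpleGraph
section
variable {n s t : ℕ} {G : SimpleGraph (Fin n)} [DecidableRel G.Adj]

def commonNbrs (G : SimpleGraph (Fin n)) [DecidableRel G.Adj] (A : Finset (Fin n)) :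
    Finset (Fin n) := univ.filter (fun x => ∀ a ∈ A, G.Adj a x)

lemma adj_of_mem_commonNbrs {A : Finset (Fin n)} {x a : Fin n} (hx : x ∈ commonNbrs G A)
    (ha : a ∈ A) : G.Adj a x := by
  simp only [commonNbrs, mem_filter] at hx
  exact hx.2 a ha

lemma card_commonNbrs_lt
    (hfree : ¬ Graph.Contains (completeBipartiteGraph (Fin s) (Fin t)) G)
    {A : Finset (Fin n)} (hA : A.card = s) : (commonNbrs G A).card < t := by
  by_contra hcon
  push_neg at hcon
  obtain ⟨B, hBsub, hBcard⟩ := Finset.exists_subset_card_eq hcon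
  apply hfree
  have hadj : ∀ a ∈ A, ∀ b ∈ B, G.Adj a b := fun a ha b hb =>
    adj_of_mem_commonNbrs (hBsub hb) ha
  have hmemA : ∀ i, (A.orderEmbOfFin hA i) ∈ A := fun i => A.orderEmbOfFin_mem hA i
  have hmemB : ∀ j, (B.orderEmbOfFin hBcard j) ∈ B := fun j => B.orderEmbOfFin_mem hBcard j
  refine ⟨⟨Sum.elim (fun i => A.orderEmbOfFin hA i) (fun j => B.orderEmbOfFin hBcard j), ?_⟩, ?_⟩
  · rintro (i | i) (j | j) hxy <;> simp only [Sum.elim_inl, Sum.elim_inr] at hxy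
    · rw [(A.orderEmbOfFin hA).injective hxy]
    · exact absurd (hxy ▸ hadj _ (hmemA i) _ (hmemB j)) (G.irrefl)
    · exact absurd (hxy ▸ hadj _ (hmemA j) _ (hmemB i)) (fun h => G.irrefl h.symm)
    · rw [(B.orderEmbOfFin hBcard).injective hxy]
  · rintro (i | i) (j | j) hab <;>
      simp only [completeBipartiteGraph, Sum.isLeft_inl, Sum.isRight_inl, Sum.isLeft_inr,
        Sum.isRight_inr] at hab
    · exact absurd hab (by simp)
    · exact hadj _ (hmemA i) _ (hmemB j)
    · exact (hadj _ (hmemA j) _ (hmemB i)).symm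
    · exact absurd hab (by simp)

lemma sum_degree_eq (W : Finset (Fin n)) :
    ∑ u ∈ W, G.degree u = ∑ x : Fin n, (G.neighborFinset x ∩ W).card := by
  have h1 : ∀ u, G.degree u = ∑ x : Fin n, if G.Adj u x then 1 else 0 := by
    intro u
    rw [degree, neighborFinset_eq_filter, Finset.card_filter]
  have h2 : ∀ x, (G.neighborFinset x ∩ W).card = ∑ u ∈ W, if G.Adj u x then 1 else 0 := by
    intro x
    have : G.neighborFinset x ∩ W = W.filter (fun u => G.Adj u x) := by
      ext u
      simp [mem_neighborFinset, G.adj_comm x u, and_comm]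
    rw [this, Finset.card_filter]
  simp only [h1, h2]
  exact Finset.sum_comm
 
lemma sum_choose_card_le
    (hfree : ¬ Graph.Contains (completeBipartiteGraph (Fin s) (Fin t)) G)
    (W : Finset (Fin n)) :
    ∑ x : Fin n, ((G.neighborFinset x ∩ W).card).choose s ≤ (W.card).choose s * (t - 1) := by
  have h1 : ∀ x : Fin n, ((G.neighborFinset x ∩ W).card).choose s
      = ((G.neighborFinset x ∩ W).powersetCard s).card := fun x =>
    (Finset.card_powersetCard _ _).symm
  calc ∑ x : Fin n, ((G.neighborFinset x ∩ W).card).choose s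
      = ∑ x : Fin n, ((G.neighborFinset x ∩ W).powersetCard s).card := by simp only [h1]
    _ = (univ.sigma (fun x : Fin n => (G.neighborFinset x ∩ W).powersetCard s)).card :=
        (Finset.card_sigma _ _).symm
    _ ≤ ((W.powersetCard s).sigma (fun A => commonNbrs G A)).card := by
        refine Finset.card_le_card_of_injOn (fun z : (Σ _x : Fin n, Finset (Fin n)) => (⟨z.2, z.1⟩ : Σ _A : Finset (Fin n), Fin n)) ?_ ?_
        · rintro ⟨x, A⟩ hz
          rw [Finset.mem_coe, Finset.mem_sigma] at hz
          have hsub := (Finset.mem_powersetCard.1 hz.2).1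
          have hcard := (Finset.mem_powersetCard.1 hz.2).2
          rw [Finset.mem_coe, Finset.mem_sigma]
          refine ⟨Finset.mem_powersetCard.2 ⟨hsub.trans inter_subset_right, hcard⟩, ?_⟩
          simp only [commonNbrs, mem_filter, mem_univ, true_and]
          intro a ha
          exact G.adj_symm ((mem_neighborFinset _ _ _).1 (inter_subset_left (hsub ha)))
        · rintro ⟨x1, A1⟩ h1 ⟨x2, A2⟩ h2 heq
          have hA : A1 = A2 := congrArg Sigma.fst heq
          have hx : x1 = x2 := congrArg Sigma.snd heq
          subst hA; subst hx; rfl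
    _ = ∑ A ∈ W.powersetCard s, (commonNbrs G A).card := Finset.card_sigma _ _
    _ ≤ ∑ _A ∈ W.powersetCard s, (t - 1) := by
        refine Finset.sum_le_sum fun A hA => ?_
        exact Nat.le_sub_one_of_lt (card_commonNbrs_lt hfree (Finset.mem_powersetCard.1 hA).2)
    _ = (W.card).choose s * (t - 1) := by
        rw [Finset.sum_const, Finset.card_powersetCard, smul_eq_mul]

end

section MainHelpers
open Finset
variable {n s t : ℕ} {G : SimpleGraph (Fin n)} [DecidableRel G.Adj]

lemma ncard_neighborSet_eq_degree (u : Fin n) : (G.neighborSet u).ncard = G.degree u := by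
  rw [SimpleGraph.degree, SimpleGraph.neighborFinset_def, Set.ncard_eq_toFinset_card']

lemma degree_le_n (u : Fin n) : G.degree u ≤ n := by
  calc G.degree u = (G.neighborFinset u).card := rfl
    _ ≤ (univ : Finset (Fin n)).card := Finset.card_le_card (Finset.subset_univ _)
    _ = n := by simp

lemma sum_choose_degree_le
    (hfree : ¬ Graph.Contains (completeBipartiteGraph (Fin s) (Fin t)) G) :
    ∑ x : Fin n, (G.degree x).choose s ≤ n.choose s * (t - 1) := by
  have h := sum_choose_card_le hfree (univ : Finset (Fin n))
  simp only [Finset.inter_univ, Finset.card_univ, Fintype.card_fin] at h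
  exact h

lemma sum_degree_le
    (hfree : ¬ Graph.Contains (completeBipartiteGraph (Fin s) (Fin t)) G)
    (hs : 1 ≤ s) (H : Finset (Fin n)) :
    ∑ u ∈ H, G.degree u ≤ (s - 1) * n + H.card.choose s * (t - 1) := by
  rw [sum_degree_eq]
  calc ∑ x : Fin n, (G.neighborFinset x ∩ H).card
      ≤ ∑ x : Fin n, ((s - 1) + ((G.neighborFinset x ∩ H).card).choose s) :=
        Finset.sum_le_sum (fun x _ => le_choose_add hs _)
    _ = (s - 1) * n + ∑ x : Fin n, ((G.neighborFinset x ∩ H).card).choose s := by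
        rw [Finset.sum_add_distrib, Finset.sum_const, Finset.card_univ, Fintype.card_fin,
          smul_eq_mul, Nat.mul_comm]
    _ ≤ (s - 1) * n + H.card.choose s * (t - 1) :=
        Nat.add_le_add_left (sum_choose_card_le hfree H) _

lemma card_heavy_lt
    (hfree : ¬ Graph.Contains (completeBipartiteGraph (Fin s) (Fin t)) G)
    (hs : 1 ≤ s) {D m : ℕ} (H : Finset (Fin n)) (hH : ∀ u ∈ H, D ≤ G.degree u)
    (hmD : s * n + 1 ≤ m * D) (hc : m.choose s * (t - 1) < n) : H.card < m := by
  by_contra hcon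
  push_neg at hcon
  obtain ⟨H', hsub, hcard⟩ := Finset.exists_subset_card_eq hcon
  have h1 : m * D ≤ ∑ u ∈ H', G.degree u := by
    have := Finset.card_nsmul_le_sum H' (fun u => G.degree u) D
      (fun u hu => hH u (hsub hu))
    rwa [hcard, smul_eq_mul] at this
  have h2 : ∑ u ∈ H', G.degree u ≤ (s - 1) * n + m.choose s * (t - 1) := by
    have := sum_degree_le hfree hs H'
    rwa [hcard] at this
  have e1 : (s - 1) * n = s * n - n := by rw [Nat.sub_one_mul]
  have e2 : n ≤ s * n := Nat.le_mul_of_pos_left n hs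
  omega

lemma six_le_fact : ∀ s : ℕ, 2 ≤ s → 6 * (s - 1) ≤ Nat.factorial (s + 1) := by
  intro s
  induction s with
  | zero => omega
  | succ m ih =>
    intro h
    rcases Nat.lt_or_ge m 2 with h' | h'
    · interval_cases m
      · simp [Nat.factorial]
      · norm_num [Nat.factorial]
    · have hm := ih h'
      rw [Nat.factorial_succ]
      show 6 * (m + 1 - 1) ≤ (m + 2) * Nat.factorial (m + 1)
      have h2 : 6 * (m + 1 - 1) ≤ (m + 2) * (6 * (m - 1)) := by
        obtain ⟨k, rfl⟩ : ∃ k, m = k + 2 := ⟨m - 2, by omega⟩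
        have e : k + 2 - 1 = k + 1 := by omega
        have e2 : k + 2 + 1 - 1 = k + 2 := by omega
        rw [e, e2]
        nlinarith
      calc 6 * (m + 1 - 1) ≤ (m + 2) * (6 * (m - 1)) := h2
        _ ≤ (m + 2) * Nat.factorial (m + 1) := Nat.mul_le_mul_left _ hm

end MainHelpers


/-- in an `n`-vertex `K_{s,t}`-free graph (`p < s ≤ t`, `s < q`, `n` large),
the number of copies of `K_{p,q}` whose `p`-side meets the set of vertices of degree at
most `εn` is at most `ε n^{p+q-1}`. -/
theorem stmt_2 (p s t q : ℕ) (hps : p < s) (hst : s ≤ t) (hsq : s < q)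
    (ε : ℝ) (hε : 0 < ε) :
    ∃ n₀ : ℕ, ∀ n ≥ n₀, ∀ G : SimpleGraph (Fin n),
      ¬ Graph.Contains (completeBipartiteGraph (Fin s) (Fin t)) G →
      (({ST : Finset (Fin n) × Finset (Fin n) |
          ST.1.card = p ∧ ST.2.card = q ∧ Disjoint ST.1 ST.2 ∧
          (∀ a ∈ ST.1, ∀ b ∈ ST.2, G.Adj a b) ∧
          ∃ u ∈ ST.1, ((G.neighborSet u).ncard : ℝ) ≤ ε * n}.ncard : ℝ)) ≤
        ε * (n : ℝ) ^ (p + q - 1) := by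
  classical
  have hs1 : 1 ≤ s := by omega
  have ht1 : 1 ≤ t := hs1.trans hst
  set K : ℕ := max 1 ⌈8 * (t : ℝ) / ε⌉₊ with hKdef
  set m₀ : ℕ := s * (K + 1) with hm₀def
  set c₂ : ℕ := m₀.choose s * (t - 1) with hc₂def
  refine ⟨max (⌈(t : ℝ) ^ p / ε⌉₊ + 1) (c₂ + 1), fun n hn G hfree => ?_⟩
  haveI : DecidableRel G.Adj := Classical.decRel _
  have hn1 : 1 ≤ n := le_trans (le_trans (Nat.le_add_left 1 c₂) (le_max_right _ _)) hn
  have hnc₂ : c₂ < n := lt_of_lt_of_le (Nat.lt_succ_self c₂) ((le_max_right _ _).trans hn)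
  have hnN : (0 : ℝ) < (n : ℝ) := by exact_mod_cast hn1
  have hnN1 : (1 : ℝ) ≤ (n : ℝ) := by exact_mod_cast hn1
  set F : Finset (Finset (Fin n) × Finset (Fin n)) :=
    univ.filter (fun ST : Finset (Fin n) × Finset (Fin n) =>
      ST.1.card = p ∧ ST.2.card = q ∧ Disjoint ST.1 ST.2 ∧
      (∀ a ∈ ST.1, ∀ b ∈ ST.2, G.Adj a b) ∧
      ∃ u ∈ ST.1, ((G.neighborSet u).ncard : ℝ) ≤ ε * n) with hFdef
  have hmem : ∀ ST : Finset (Fin n) × Finset (Fin n), ST ∈ F ↔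
      (ST.1.card = p ∧ ST.2.card = q ∧ Disjoint ST.1 ST.2 ∧
      (∀ a ∈ ST.1, ∀ b ∈ ST.2, G.Adj a b) ∧
      ∃ u ∈ ST.1, ((G.neighborSet u).ncard : ℝ) ≤ ε * n) := by
    intro ST
    simp [hFdef]
  have hset : {ST : Finset (Fin n) × Finset (Fin n) |
          ST.1.card = p ∧ ST.2.card = q ∧ Disjoint ST.1 ST.2 ∧
          (∀ a ∈ ST.1, ∀ b ∈ ST.2, G.Adj a b) ∧
          ∃ u ∈ ST.1, ((G.neighborSet u).ncard : ℝ) ≤ ε * n} = ↑F := by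
    ext ST
    simp only [Set.mem_setOf_eq, Finset.coe_filter, hFdef, Finset.mem_univ, true_and]
  rw [hset, Set.ncard_coe_finset]
  rcases Nat.eq_zero_or_pos p with rfl | hp1
  · -- p = 0
    have hF0 : F = ∅ := by
      ext ST
      rw [hmem]
      simp only [Finset.notMem_empty, iff_false]
      rintro ⟨h1, -, -, -, u, hu, -⟩
      rw [Finset.card_eq_zero] at h1
      simp [h1] at hu
    rw [hF0]
    simp only [Finset.card_empty, Nat.cast_zero]
    positivity
  rcases Nat.lt_or_ge p 2 with hp2 | hp2
  · -- p = 1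
    have hp : p = 1 := by omega
    subst hp
    have hs2 : 2 ≤ s := by omega
    have hq3 : 3 ≤ q := by omega
    set U' : Finset (Fin n) := univ.filter (fun u => ((G.neighborSet u).ncard : ℝ) ≤ ε * n)
      with hU'def
    set D : ℕ := n / K + 1 with hDdef
    set Hv : Finset (Fin n) := univ.filter (fun u => D ≤ G.degree u) with hHdef
    have hK1 : 1 ≤ K := le_max_left 1 _
    have hKR : 8 * (t : ℝ) / ε ≤ (K : ℝ) := by
      calc 8 * (t : ℝ) / ε ≤ (⌈8 * (t : ℝ) / ε⌉₊ : ℝ) := Nat.le_ceil _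
        _ ≤ (K : ℝ) := Nat.cast_le.2 (by rw [hKdef]; exact le_max_right _ _)
    -- Step A : card F ≤ sum over U' of (deg choose q)
    have hstepA : F.card ≤ (U'.sigma (fun u => (G.neighborFinset u).powersetCard q)).card := by
      apply Finset.card_le_card_of_injOn (fun ST =>
        ⟨if h : ST.1.Nonempty then ST.1.min' h else (⟨0, hn1⟩ : Fin n), ST.2⟩)
      · intro ST hST
        rw [Finset.mem_coe, hmem] at hST
        obtain ⟨h1, h2, hdisj, hadj, u, huS, hud⟩ := hST
        obtain ⟨u', hu'⟩ := Finset.card_eq_one.1 h1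
        have huu : u = u' := by rw [hu'] at huS; exact Finset.mem_singleton.1 huS
        subst huu
        have hne : ST.1.Nonempty := ⟨u, huS⟩
        have hmin : (if h : ST.1.Nonempty then ST.1.min' h else (⟨0, hn1⟩ : Fin n)) = u := by
          rw [dif_pos hne]
          simp [hu']
        simp only [Finset.mem_coe, Finset.mem_sigma, hmin]
        constructor
        · exact Finset.mem_filter.2 ⟨Finset.mem_univ _, hud⟩
        · refine Finset.mem_powersetCard.2 ⟨?_, h2⟩
          intro b hb
          rw [SimpleGraph.mem_neighborFinset]
          exact hadj u huS b hb
      · intro ST1 h1' ST2 h2' heq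
        obtain ⟨h11, -⟩ := (hmem ST1).1 h1'
        obtain ⟨h21, -⟩ := (hmem ST2).1 h2'
        obtain ⟨u1, hu1⟩ := Finset.card_eq_one.1 h11
        obtain ⟨u2, hu2⟩ := Finset.card_eq_one.1 h21
        have hne1 : ST1.1.Nonempty := by rw [hu1]; exact ⟨u1, Finset.mem_singleton_self u1⟩
        have hne2 : ST2.1.Nonempty := by rw [hu2]; exact ⟨u2, Finset.mem_singleton_self u2⟩
        have hfst : (if h : ST1.1.Nonempty then ST1.1.min' h else (⟨0, hn1⟩ : Fin n))
            = (if h : ST2.1.Nonempty then ST2.1.min' h else (⟨0, hn1⟩ : Fin n)) :=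
          congrArg Sigma.fst heq
        have hsnd : ST1.2 = ST2.2 := congrArg Sigma.snd heq
        rw [dif_pos hne1, dif_pos hne2] at hfst
        have e1 : u1 = u2 := by
          have a1 : ST1.1.min' hne1 = u1 := by simp [hu1]
          have a2 : ST2.1.min' hne2 = u2 := by simp [hu2]
          rw [a1, a2] at hfst
          exact hfst
        have hfst' : ST1.1 = ST2.1 := by rw [hu1, hu2, e1]
        exact Prod.ext hfst' hsnd
    have hsig : (U'.sigma (fun u => (G.neighborFinset u).powersetCard q)).card
        = ∑ u ∈ U', (G.degree u).choose q := by
      rw [Finset.card_sigma]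
      exact Finset.sum_congr rfl fun u _ => by rw [Finset.card_powersetCard]; rfl
    have hsplit : ∑ u ∈ U', (G.degree u).choose q
        = ∑ u ∈ U'.filter (fun u => G.degree u ≤ n / K), (G.degree u).choose q
          + ∑ u ∈ U'.filter (fun u => ¬ G.degree u ≤ n / K), (G.degree u).choose q :=
      (Finset.sum_filter_add_sum_filter_not _ _ _).symm
    -- light bound (ℕ)
    have hlight : ∑ u ∈ U'.filter (fun u => G.degree u ≤ n / K), (G.degree u).choose q
        ≤ n.choose s * (t - 1) * ((n / K).choose (q - s)) := by
      have hterm : ∀ u ∈ U'.filter (fun u => G.degree u ≤ n / K),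
          (G.degree u).choose q ≤ (G.degree u).choose s * ((n / K).choose (q - s)) := by
        intro u hu
        have hdu : G.degree u ≤ n / K := (Finset.mem_filter.1 hu).2
        have hqe : s + (q - s) = q := by omega
        calc (G.degree u).choose q = (G.degree u).choose (s + (q - s)) := by rw [hqe]
          _ ≤ (G.degree u).choose s * (G.degree u).choose (q - s) := choose_add_le_mul _ _ _
          _ ≤ (G.degree u).choose s * ((n / K).choose (q - s)) :=
              Nat.mul_le_mul_left _ (Nat.choose_le_choose _ hdu)
      calc ∑ u ∈ U'.filter (fun u => G.degree u ≤ n / K), (G.degree u).choose q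
          ≤ ∑ u ∈ U'.filter (fun u => G.degree u ≤ n / K),
              (G.degree u).choose s * ((n / K).choose (q - s)) := Finset.sum_le_sum hterm
        _ ≤ ∑ u : Fin n, (G.degree u).choose s * ((n / K).choose (q - s)) :=
            Finset.sum_le_sum_of_subset (Finset.subset_univ _)
        _ = (∑ u : Fin n, (G.degree u).choose s) * ((n / K).choose (q - s)) := by
            rw [Finset.sum_mul]
        _ ≤ n.choose s * (t - 1) * ((n / K).choose (q - s)) :=
            Nat.mul_le_mul_right _ (sum_choose_degree_le hfree)
    -- heavy set cardinality
    have hmD : s * n + 1 ≤ m₀ * D := by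
      have h1 : n < K * (n / K + 1) := Nat.lt_mul_div_succ n (by omega)
      have h2 : n + 1 ≤ (K + 1) * D := by
        rw [hDdef]
        calc n + 1 ≤ K * (n / K + 1) := h1
          _ ≤ (K + 1) * (n / K + 1) := Nat.mul_le_mul_right _ (by omega)
      have h3 : s * n + 1 ≤ s * (n + 1) := by rw [Nat.mul_succ]; omega
      calc s * n + 1 ≤ s * (n + 1) := h3
        _ ≤ s * ((K + 1) * D) := Nat.mul_le_mul_left _ h2
        _ = m₀ * D := by rw [hm₀def, Nat.mul_assoc]
    have hHcard : Hv.card < m₀ :=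
      card_heavy_lt hfree hs1 Hv (fun u hu => (Finset.mem_filter.1 hu).2) hmD
        (by rw [← hc₂def]; exact hnc₂)
    have hsumH : ∑ u ∈ Hv, G.degree u ≤ (s - 1) * n + c₂ := by
      calc ∑ u ∈ Hv, G.degree u ≤ (s - 1) * n + Hv.card.choose s * (t - 1) :=
            sum_degree_le hfree hs1 Hv
        _ ≤ (s - 1) * n + m₀.choose s * (t - 1) :=
            Nat.add_le_add_left (Nat.mul_le_mul_right _ (Nat.choose_le_choose s hHcard.le)) _
        _ = (s - 1) * n + c₂ := by rw [hc₂def]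
    have hsubH : U'.filter (fun u => ¬ G.degree u ≤ n / K) ⊆ Hv := by
      intro u hu
      have h := (Finset.mem_filter.1 hu).2
      refine Finset.mem_filter.2 ⟨Finset.mem_univ _, ?_⟩
      rw [hDdef]
      omega
    have hsumUH : ∑ u ∈ U'.filter (fun u => ¬ G.degree u ≤ n / K), G.degree u
        ≤ (s - 1) * n + c₂ := (Finset.sum_le_sum_of_subset hsubH).trans hsumH
    -- real facts
    have hdegU : ∀ u ∈ U', ((G.degree u : ℝ)) ≤ ε * n := by
      intro u hu
      have h := (Finset.mem_filter.1 hu).2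
      rwa [ncard_neighborSet_eq_degree] at h
    have hdegn : ∀ u : Fin n, ((G.degree u : ℝ)) ≤ (n : ℝ) := fun u => by
      exact_mod_cast degree_le_n u
    have hfact6 : (6 : ℝ) ≤ (Nat.factorial q : ℝ) := by
      have h : 6 ≤ Nat.factorial q := by
        calc 6 = Nat.factorial 3 := rfl
          _ ≤ Nat.factorial q := Nat.factorial_le hq3
      exact_mod_cast h
    have hfactpos : (0 : ℝ) < (Nat.factorial q : ℝ) := by positivity
    -- heavy real bound
    have hheavy : ((∑ u ∈ U'.filter (fun u => ¬ G.degree u ≤ n / K), (G.degree u).choose q : ℕ) : ℝ)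
        ≤ ε * (n : ℝ) ^ (q - 1) / (Nat.factorial q)
          * ((∑ u ∈ U'.filter (fun u => ¬ G.degree u ≤ n / K), G.degree u : ℕ) : ℝ) := by
      rw [Nat.cast_sum, Nat.cast_sum, Finset.mul_sum]
      refine Finset.sum_le_sum fun u hu => ?_
      have huU : u ∈ U' := Finset.mem_of_mem_filter _ hu
      have hd0 : (0 : ℝ) ≤ (G.degree u : ℝ) := Nat.cast_nonneg _
      have e2 : (G.degree u : ℝ) ^ (q - 2) * ((G.degree u : ℝ) * (G.degree u : ℝ))
          = (G.degree u : ℝ) ^ q := by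
        rw [← pow_two, ← pow_add]
        congr 1
        omega
      have h2 : (G.degree u : ℝ) ^ q ≤ (n : ℝ) ^ (q - 2) * ((ε * n) * (G.degree u : ℝ)) := by
        rw [← e2]
        apply mul_le_mul (pow_le_pow_left₀ hd0 (hdegn u) _)
          (mul_le_mul (hdegU u huU) le_rfl hd0 (by positivity)) (by positivity) (by positivity)
      have e3 : (n : ℝ) ^ (q - 2) * (n : ℝ) = (n : ℝ) ^ (q - 1) := by
        rw [← pow_succ]
        congr 1
        omega
      calc ((G.degree u).choose q : ℝ) ≤ (G.degree u : ℝ) ^ q / (Nat.factorial q) :=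
            Nat.choose_le_pow_div q (G.degree u)
        _ ≤ ((n : ℝ) ^ (q - 2) * ((ε * n) * (G.degree u : ℝ))) / (Nat.factorial q) := by
            gcongr
        _ = ε * (n : ℝ) ^ (q - 1) / (Nat.factorial q) * (G.degree u : ℝ) := by
            rw [← e3]
            ring
    -- light real bound
    have hlightR : ((n.choose s * (t - 1) * ((n / K).choose (q - s)) : ℕ) : ℝ)
        ≤ ε / 8 * (n : ℝ) ^ q := by
      have hKpos : (0 : ℝ) < (K : ℝ) := by exact_mod_cast hK1
      have h8t : (0 : ℝ) < 8 * (t : ℝ) / ε := by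
        have : (0:ℝ) < (t:ℝ) := by exact_mod_cast ht1
        positivity
      have hx1 : ((n / K : ℕ) : ℝ) ≤ (n : ℝ) / K := Nat.cast_div_le
      have hx2 : ((n / K : ℕ) : ℝ) ≤ ε * n / (8 * t) := by
        refine hx1.trans ?_
        calc (n : ℝ) / K ≤ (n : ℝ) / (8 * (t : ℝ) / ε) :=
              div_le_div_of_nonneg_left (by positivity) h8t hKR
          _ = ε * n / (8 * t) := by
              field_simp
      have hxn : ((n / K : ℕ) : ℝ) ≤ (n : ℝ) := by
        exact_mod_cast Nat.div_le_self n K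
      have hx0 : (0 : ℝ) ≤ ((n / K : ℕ) : ℝ) := Nat.cast_nonneg _
      have c1 : ((n.choose s : ℕ) : ℝ) ≤ (n : ℝ) ^ s := by
        exact_mod_cast Nat.choose_le_pow n s
      have c2 : (((t - 1) : ℕ) : ℝ) ≤ (t : ℝ) := by exact_mod_cast Nat.sub_le t 1
      have c3 : (((n / K).choose (q - s) : ℕ) : ℝ) ≤ ((n / K : ℕ) : ℝ) ^ (q - s) := by
        exact_mod_cast Nat.choose_le_pow (n / K) (q - s)
      have hqs1 : 1 ≤ q - s := by omega
      have step1 : ((n / K : ℕ) : ℝ) ^ (q - s)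
          ≤ ((n / K : ℕ) : ℝ) * (n : ℝ) ^ (q - s - 1) := by
        have e4 : ((n / K : ℕ) : ℝ) ^ (q - s)
            = ((n / K : ℕ) : ℝ) * ((n / K : ℕ) : ℝ) ^ (q - s - 1) := by
          rw [← pow_succ']
          congr 1
          omega
        rw [e4]
        apply mul_le_mul_of_nonneg_left (pow_le_pow_left₀ hx0 hxn _) hx0
      have epow : (n : ℝ) ^ s * (n : ℝ) ^ (q - s - 1) * (n : ℝ) = (n : ℝ) ^ q := by
        rw [mul_assoc, ← pow_succ, ← pow_add]
        congr 1
        omega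
      have ht0 : (0 : ℝ) < (t : ℝ) := by exact_mod_cast ht1
      calc ((n.choose s * (t - 1) * ((n / K).choose (q - s)) : ℕ) : ℝ)
          = ((n.choose s : ℕ) : ℝ) * (((t - 1) : ℕ) : ℝ) * (((n / K).choose (q - s) : ℕ) : ℝ) := by
            push_cast
            ring
        _ ≤ (n : ℝ) ^ s * (t : ℝ) * (((n / K : ℕ) : ℝ) ^ (q - s)) := by
            apply mul_le_mul (mul_le_mul c1 c2 (by positivity) (by positivity)) c3
              (by positivity) (by positivity)
        _ ≤ (n : ℝ) ^ s * (t : ℝ) * (((n / K : ℕ) : ℝ) * (n : ℝ) ^ (q - s - 1)) := by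
            apply mul_le_mul_of_nonneg_left step1 (by positivity)
        _ = ((t : ℝ) * ((n / K : ℕ) : ℝ)) * ((n : ℝ) ^ s * (n : ℝ) ^ (q - s - 1)) := by ring
        _ ≤ ((t : ℝ) * (ε * n / (8 * t))) * ((n : ℝ) ^ s * (n : ℝ) ^ (q - s - 1)) := by
            apply mul_le_mul_of_nonneg_right (mul_le_mul_of_nonneg_left hx2 ht0.le)
              (by positivity)
        _ = ε / 8 * ((n : ℝ) ^ s * (n : ℝ) ^ (q - s - 1) * (n : ℝ)) := by
            field_simp
        _ = ε / 8 * (n : ℝ) ^ q := by rw [epow]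
    -- combine heavy
    have key1 : (((s - 1) * n + c₂ : ℕ) : ℝ) ≤ (Nat.factorial q : ℝ) / 3 * (n : ℝ) := by
      have a1 : ((s - 1 : ℕ) : ℝ) ≤ (Nat.factorial q : ℝ) / 6 := by
        rw [le_div_iff₀ (by norm_num : (0:ℝ) < 6)]
        have h6 : 6 * (s - 1) ≤ Nat.factorial q := by
          calc 6 * (s - 1) ≤ Nat.factorial (s + 1) := six_le_fact s hs2
            _ ≤ Nat.factorial q := Nat.factorial_le (by omega)
        calc ((s - 1 : ℕ) : ℝ) * 6 = ((6 * (s - 1) : ℕ) : ℝ) := by push_cast; ring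
          _ ≤ (Nat.factorial q : ℝ) := by exact_mod_cast h6
      have a2 : ((c₂ : ℕ) : ℝ) ≤ (n : ℝ) := by exact_mod_cast hnc₂.le
      have a3 : (1 : ℝ) ≤ (Nat.factorial q : ℝ) / 6 := by linarith
      calc (((s - 1) * n + c₂ : ℕ) : ℝ) = ((s - 1 : ℕ) : ℝ) * (n : ℝ) + ((c₂ : ℕ) : ℝ) := by
            push_cast
            ring
        _ ≤ (Nat.factorial q : ℝ) / 6 * (n : ℝ) + 1 * (n : ℝ) := by
            apply add_le_add (mul_le_mul_of_nonneg_right a1 hnN.le)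
            linarith
        _ ≤ (Nat.factorial q : ℝ) / 6 * (n : ℝ) + (Nat.factorial q : ℝ) / 6 * (n : ℝ) :=
            add_le_add_right (mul_le_mul_of_nonneg_right a3 hnN.le) _
        _ = (Nat.factorial q : ℝ) / 3 * (n : ℝ) := by ring
    have hheavyR : ε * (n : ℝ) ^ (q - 1) / (Nat.factorial q) * (((s - 1) * n + c₂ : ℕ) : ℝ)
        ≤ ε / 3 * (n : ℝ) ^ q := by
      calc ε * (n : ℝ) ^ (q - 1) / (Nat.factorial q) * (((s - 1) * n + c₂ : ℕ) : ℝ)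
          ≤ ε * (n : ℝ) ^ (q - 1) / (Nat.factorial q) * ((Nat.factorial q : ℝ) / 3 * (n : ℝ)) :=
            mul_le_mul_of_nonneg_left key1 (by positivity)
        _ = ε / 3 * ((n : ℝ) ^ (q - 1) * (n : ℝ)) := by
            field_simp
        _ = ε / 3 * (n : ℝ) ^ q := by
            rw [← pow_succ]
            congr 2
            omega
    -- final assembly
    have hpq : 1 + q - 1 = q := by omega
    rw [hpq]
    calc (F.card : ℝ)
        ≤ ((∑ u ∈ U', (G.degree u).choose q : ℕ) : ℝ) := by
          exact_mod_cast hstepA.trans_eq hsig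
      _ = ((∑ u ∈ U'.filter (fun u => G.degree u ≤ n / K), (G.degree u).choose q : ℕ) : ℝ)
          + ((∑ u ∈ U'.filter (fun u => ¬ G.degree u ≤ n / K), (G.degree u).choose q : ℕ) : ℝ) := by
          rw [hsplit]
          push_cast
          ring
      _ ≤ ε / 8 * (n : ℝ) ^ q
          + ε * (n : ℝ) ^ (q - 1) / (Nat.factorial q) * (((s - 1) * n + c₂ : ℕ) : ℝ) := by
          apply add_le_add
          · exact le_trans (by exact_mod_cast Nat.cast_le.2 hlight) hlightR
          · refine hheavy.trans ?_
            apply mul_le_mul_of_nonneg_left _ (by positivity)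
            exact_mod_cast hsumUH
      _ ≤ ε / 8 * (n : ℝ) ^ q + ε / 3 * (n : ℝ) ^ q := add_le_add_right hheavyR _
      _ ≤ ε * (n : ℝ) ^ q := by
          have hx : (0 : ℝ) ≤ (n : ℝ) ^ q := by positivity
          have hεx : (0 : ℝ) ≤ ε * (n : ℝ) ^ q := mul_nonneg hε.le hx
          linarith
  · -- p ≥ 2
    have hq : s ≤ q := hsq.le
    have hstep : F.card ≤ ((univ.powersetCard s).sigma
        (fun A => (commonNbrs G A).powersetCard p ×ˢ
          ((univ : Finset (Fin n)).powersetCard (q - s)))).card := by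
      apply Finset.card_le_card_of_injOn
        (fun ST => ⟨firstk ST.2 s, (ST.1, ST.2 \ firstk ST.2 s)⟩)
      · intro ST hST
        rw [Finset.mem_coe, hmem] at hST
        obtain ⟨h1, h2, hdisj, hadj, -⟩ := hST
        have hAsub : firstk ST.2 s ⊆ ST.2 := firstk_subset _ _
        have hAcard : (firstk ST.2 s).card = s := card_firstk _ (by omega)
        rw [Finset.mem_coe, Finset.mem_sigma]
        constructor
        · exact Finset.mem_powersetCard.2 ⟨Finset.subset_univ _, hAcard⟩
        · rw [Finset.mem_product]
          constructor
          · refine Finset.mem_powersetCard.2 ⟨?_, h1⟩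
            intro x hx
            simp only [commonNbrs, Finset.mem_filter, Finset.mem_univ, true_and]
            intro a ha
            exact (hadj x hx a (hAsub ha)).symm
          · refine Finset.mem_powersetCard.2 ⟨Finset.subset_univ _, ?_⟩
            rw [Finset.card_sdiff_of_subset hAsub, h2, hAcard]
      · intro ST1 h1' ST2 h2' heq
        have hfst : firstk ST1.2 s = firstk ST2.2 s := congrArg Sigma.fst heq
        have hsnd : (ST1.1, ST1.2 \ firstk ST1.2 s) = (ST2.1, ST2.2 \ firstk ST2.2 s) :=
          congrArg Sigma.snd heq
        have hST1 : ST1.1 = ST2.1 := (Prod.mk.inj hsnd).1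
        have hsd : ST1.2 \ firstk ST1.2 s = ST2.2 \ firstk ST2.2 s := (Prod.mk.inj hsnd).2
        have hT : ST1.2 = ST2.2 := by
          rw [← Finset.union_sdiff_of_subset (firstk_subset ST1.2 s), hsd, hfst,
            Finset.union_sdiff_of_subset (firstk_subset ST2.2 s)]
        exact Prod.ext hST1 hT
    have hnat : F.card ≤ n.choose s * ((t - 1).choose p * n.choose (q - s)) := by
      refine hstep.trans ?_
      rw [Finset.card_sigma]
      calc ∑ A ∈ univ.powersetCard s, ((commonNbrs G A).powersetCard p ×ˢ
            ((univ : Finset (Fin n)).powersetCard (q - s))).card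
          ≤ ∑ _A ∈ (univ : Finset (Fin n)).powersetCard s,
            ((t - 1).choose p * n.choose (q - s)) := by
            refine Finset.sum_le_sum fun A hA => ?_
            rw [Finset.card_product, Finset.card_powersetCard, Finset.card_powersetCard,
              Finset.card_univ, Fintype.card_fin]
            have hcn : (commonNbrs G A).card ≤ t - 1 :=
              Nat.le_sub_one_of_lt (card_commonNbrs_lt hfree (Finset.mem_powersetCard.1 hA).2)
            exact Nat.mul_le_mul_right _ (Nat.choose_le_choose _ hcn)
        _ = n.choose s * ((t - 1).choose p * n.choose (q - s)) := by
            rw [Finset.sum_const, Finset.card_powersetCard, Finset.card_univ,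
              Fintype.card_fin, smul_eq_mul]
    have htp : ((t : ℝ)) ^ p ≤ ε * n := by
      have h1 : ((⌈(t : ℝ) ^ p / ε⌉₊ + 1 : ℕ) : ℝ) ≤ (n : ℝ) := by
        exact_mod_cast (le_max_left _ _).trans hn
      have h2 : (t : ℝ) ^ p / ε ≤ (n : ℝ) :=
        le_trans (Nat.le_ceil _) (by push_cast at h1 ⊢; linarith)
      rwa [div_le_iff₀ hε, mul_comm] at h2
    have c2 : (((t - 1).choose p : ℕ) : ℝ) ≤ (t : ℝ) ^ p := by
      calc (((t - 1).choose p : ℕ) : ℝ) ≤ (((t - 1) ^ p : ℕ) : ℝ) := by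
            exact_mod_cast Nat.choose_le_pow (t - 1) p
        _ ≤ (t : ℝ) ^ p := by
            push_cast
            apply pow_le_pow_left₀ (by positivity)
            exact_mod_cast Nat.sub_le t 1
    have hreal : (F.card : ℝ) ≤ (n : ℝ) ^ s * ((t : ℝ) ^ p * (n : ℝ) ^ (q - s)) := by
      calc (F.card : ℝ)
          ≤ ((n.choose s * ((t - 1).choose p * n.choose (q - s)) : ℕ) : ℝ) := Nat.cast_le.2 hnat
        _ = (n.choose s : ℝ) * (((t - 1).choose p : ℝ) * (n.choose (q - s) : ℝ)) := by
            push_cast; ring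
        _ ≤ (n : ℝ) ^ s * ((t : ℝ) ^ p * (n : ℝ) ^ (q - s)) := by
            have c1 : ((n.choose s : ℕ) : ℝ) ≤ (n : ℝ) ^ s := by
              exact_mod_cast Nat.choose_le_pow n s
            have c3 : ((n.choose (q - s) : ℕ) : ℝ) ≤ (n : ℝ) ^ (q - s) := by
              exact_mod_cast Nat.choose_le_pow n (q - s)
            gcongr <;> positivity
    calc (F.card : ℝ) ≤ (n : ℝ) ^ s * ((t : ℝ) ^ p * (n : ℝ) ^ (q - s)) := hreal
      _ = (t : ℝ) ^ p * ((n : ℝ) ^ s * (n : ℝ) ^ (q - s)) := by ring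
      _ = (t : ℝ) ^ p * (n : ℝ) ^ q := by
          have hqe : s + (q - s) = q := by omega
          rw [← pow_add, hqe]
      _ ≤ (ε * n) * (n : ℝ) ^ q := mul_le_mul_of_nonneg_right htp (by positivity)
      _ = ε * (n : ℝ) ^ (q + 1) := by rw [pow_succ]; ring
      _ ≤ ε * (n : ℝ) ^ (p + q - 1) := by
          apply mul_le_mul_of_nonneg_left _ hε.le
          apply pow_le_pow_right₀ hnN1
          omega
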